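/- arXiv:1012.3553 — 5 statements merged into one kernel-verified Lean document; each statement's English description precedes it below -/
import Mathlib

section
/- Let n = m·d with m ≥ 2 and q^d ≡ 1 (mod 4), and view GL_m(q^d) ≤ GL_n(q) by restriction of scalars. Then there exists y ∈ GL_m(q^d) of order 4 whose image in PGL_n(q) = GL_n(q)/Z(GL_n(q)) also has order 4. If moreover m ≥ 3, such a y can be chosen in SL_n(q). -/
section Aux

variable {K V : Type*} [Field K] [AddCommGroup V] [Module K V] {ι : Type*}

/-- The diagonal automorphism with eigenvalues `c j` on the basis `b`. -/
noncomputable def diagAut (b : Module.Basis ι K V) (c : ι → Kˣ) : V ≃ₗ[K] V :=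
  LinearEquiv.ofLinear (b.constr K fun j => (c j : K) • b j)
    (b.constr K fun j => (((c j)⁻¹ : Kˣ) : K) • b j)
    (by
      apply b.ext; intro j
      simp [Module.Basis.constr_basis, smul_smul])
    (by
      apply b.ext; intro j
      simp [Module.Basis.constr_basis, smul_smul])

@[simp] lemma diagAut_apply (b : Module.Basis ι K V) (c : ι → Kˣ) (j : ι) :
    diagAut b c (b j) = (c j : K) • b j := by
  simp [diagAut, Module.Basis.constr_basis]

lemma pow_apply_eigen (y : V ≃ₗ[K] V) (v : V) (c : K) (h : y v = c • v) (k : ℕ) :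
    (y ^ k) v = c ^ k • v := by
  induction k with
  | zero => simp
  | succ k ih =>
    have : (y ^ (k + 1)) v = (y ^ k) (y v) := by
      rw [pow_succ]; rfl
    rw [this, h, map_smul, ih, smul_smul, pow_succ, mul_comm]

lemma smul_eq_self_iff {c : K} {v : V} (hv : v ≠ 0) (h : c • v = v) : c = 1 := by
  have : (c - 1) • v = 0 := by rw [sub_smul, one_smul, h, sub_self]
  rcases smul_eq_zero.mp this with h' | h'
  · exact sub_eq_zero.mp h'
  · exact absurd h' hv

lemma key_orders {F : Type*} [Field F] [Algebra F K] [Module F V] [IsScalarTower F K V]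
    [DecidableEq ι] (b : Module.Basis ι K V) (c : ι → Kˣ) (j0 j1 : ι) (hne : j0 ≠ j1)
    (h0 : orderOf (c j0) = 4) (h1 : c j1 = 1) (h4 : ∀ j, (c j) ^ 4 = 1) :
    orderOf (diagAut b c) = 4 ∧
      orderOf (QuotientGroup.mk ((diagAut b c).restrictScalars F) :
        (V ≃ₗ[F] V) ⧸ Subgroup.center (V ≃ₗ[F] V)) = 4 := by
  haveI : Fact (Nat.Prime 2) := ⟨by norm_num⟩
  set y := diagAut b c with hy_def
  have hy : ∀ j, y (b j) = (c j : K) • b j := diagAut_apply b c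
  have hypow : ∀ (k : ℕ) (j : ι), (y ^ k) (b j) = ((c j : K)) ^ k • b j :=
    fun k j => pow_apply_eigen y (b j) _ (hy j) k
  have hval4 : ∀ j, ((c j : K)) ^ 4 = 1 := by
    intro j
    rw [← Units.val_pow_eq_pow_val, h4 j, Units.val_one]
  have hy4 : y ^ 4 = 1 := by
    apply LinearEquiv.toLinearMap_injective
    apply b.ext; intro j
    simpa [hval4 j] using hypow 4 j
  have hzeta2 : ((c j0 : K)) ^ 2 ≠ 1 := by
    intro h
    have : (c j0) ^ 2 = 1 := Units.ext (by
      rw [Units.val_pow_eq_pow_val, h, Units.val_one])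
    have hd := orderOf_dvd_of_pow_eq_one this
    rw [h0] at hd
    norm_num at hd
  have hy2 : y ^ 2 ≠ 1 := by
    intro h
    have h2 := hypow 2 j0
    rw [h] at h2
    have : ((c j0 : K)) ^ 2 • b j0 = b j0 := h2.symm
    exact hzeta2 (smul_eq_self_iff (b.ne_zero j0) this)
  have hordy : orderOf y = 4 := by
    have := orderOf_eq_prime_pow (x := y) (p := 2) (n := 1)
      (by norm_num; exact fun h => hy2 h) (by norm_num; exact hy4)
    simpa using this
  refine ⟨hordy, ?_⟩
  set yF := y.restrictScalars F with hyF_def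
  have hyFpow : ∀ (k : ℕ) (v : V), (yF ^ k) v = (y ^ k) v := by
    intro k
    induction k with
    | zero => intro v; rfl
    | succ k ih =>
      intro v
      have h1' : (yF ^ (k + 1)) v = (yF ^ k) (yF v) := by rw [pow_succ]; rfl
      have h2' : (y ^ (k + 1)) v = (y ^ k) (y v) := by rw [pow_succ]; rfl
      rw [h1', h2', ih]
      rfl
  have hyF4 : yF ^ 4 = 1 := by
    apply LinearEquiv.ext
    intro v
    rw [hyFpow 4 v, hy4]
    rfl
  have q4 : (QuotientGroup.mk yF :
      (V ≃ₗ[F] V) ⧸ Subgroup.center (V ≃ₗ[F] V)) ^ 4 = 1 := by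
    rw [← QuotientGroup.mk_pow, hyF4, QuotientGroup.mk_one]
  have q2 : (QuotientGroup.mk yF :
      (V ≃ₗ[F] V) ⧸ Subgroup.center (V ≃ₗ[F] V)) ^ 2 ≠ 1 := by
    intro h
    rw [← QuotientGroup.mk_pow, QuotientGroup.eq_one_iff] at h
    have hc := Subgroup.mem_center_iff.mp h
    set g : V ≃ₗ[K] V := b.equiv b (Equiv.swap j0 j1) with hg_def
    have hcomm := hc (g.restrictScalars F)
    have happ := DFunLike.congr_fun hcomm (b j1)
    have hL : ((g.restrictScalars F) * (yF ^ 2)) (b j1) = b j0 := by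
      show (g.restrictScalars F) ((yF ^ 2) (b j1)) = b j0
      rw [hyFpow 2 (b j1), hypow 2 j1, h1]
      show g ((1 : K) ^ 2 • b j1) = b j0
      rw [one_pow, one_smul, Module.Basis.equiv_apply, Equiv.swap_apply_right]
    have hR : ((yF ^ 2) * (g.restrictScalars F)) (b j1) = ((c j0 : K)) ^ 2 • b j0 := by
      show (yF ^ 2) ((g.restrictScalars F) (b j1)) = ((c j0 : K)) ^ 2 • b j0
      show (yF ^ 2) (g (b j1)) = ((c j0 : K)) ^ 2 • b j0
      rw [hg_def, Module.Basis.equiv_apply, Equiv.swap_apply_right, hyFpow 2 (b j0), hypow 2 j0]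
    rw [hL, hR] at happ
    exact hzeta2 (smul_eq_self_iff (b.ne_zero j0) happ.symm)
  have := orderOf_eq_prime_pow
    (x := (QuotientGroup.mk yF : (V ≃ₗ[F] V) ⧸ Subgroup.center (V ≃ₗ[F] V)))
    (p := 2) (n := 1) (by norm_num; exact fun h => q2 h) (by norm_num; exact q4)
  simpa using this

end Aux

set_option maxHeartbeats 1000000 in
/-- Let `K/F` be an extension of finite fields with `|K| = q^d ≡ 1 (mod 4)` and let `V` be a
`K`-vector space of dimension `m ≥ 2`, viewed also as an `F`-vector space (so that
`GL_m(q^d) ≤ GL_n(q)`, `n = md`). Then there is a `K`-linear automorphism `y` of `V` of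
order 4 whose image in `PGL_n(q)` (the quotient of the group of `F`-linear automorphisms of
`V` by its centre, i.e. the scalars) also has order 4; and if moreover `m ≥ 3`, such a `y`
can be chosen with `F`-determinant 1, i.e. in `SL_n(q)`. -/
theorem stmt7 (F K : Type*) [Field F] [Fintype F] [Field K] [Fintype K] [Algebra F K]
    (V : Type*) [AddCommGroup V] [Module F V] [Module K V] [IsScalarTower F K V]
    [FiniteDimensional K V]
    (hm : 2 ≤ Module.finrank K V) (hq : Fintype.card K % 4 = 1) :
    (∃ y : V ≃ₗ[K] V, orderOf y = 4 ∧
      orderOf (QuotientGroup.mk (y.restrictScalars F) :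
        (V ≃ₗ[F] V) ⧸ Subgroup.center (V ≃ₗ[F] V)) = 4) ∧
    (3 ≤ Module.finrank K V → ∃ y : V ≃ₗ[K] V, orderOf y = 4 ∧
      orderOf (QuotientGroup.mk (y.restrictScalars F) :
        (V ≃ₗ[F] V) ⧸ Subgroup.center (V ≃ₗ[F] V)) = 4 ∧
      LinearMap.det ((y.restrictScalars F : V ≃ₗ[F] V) : V →ₗ[F] V) = 1) := by
  classical
  -- find a unit of order 4 in `K`
  obtain ⟨g0, hg0⟩ := IsCyclic.exists_ofOrder_eq_natCard (α := Kˣ)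
  have hcard : Nat.card Kˣ = Fintype.card K - 1 := by
    rw [Nat.card_eq_fintype_card, Fintype.card_units]
  have h2card : 2 ≤ Fintype.card K := Fintype.one_lt_card
  have h4dvd : 4 ∣ orderOf g0 := by
    rw [hg0, hcard]
    omega
  set ζ : Kˣ := g0 ^ (orderOf g0 / 4) with hζ_def
  have hζ : orderOf ζ = 4 := by
    apply orderOf_pow_orderOf_div
    · rw [hg0, hcard]; omega
    · exact h4dvd
  have hζ4 : ζ ^ 4 = 1 := by rw [← hζ]; exact pow_orderOf_eq_one ζ
  set m := Module.finrank K V with hm_def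
  let b : Module.Basis (Fin m) K V := Module.finBasis K V
  constructor
  · -- Part 1 : m ≥ 2
    set j0 : Fin m := ⟨0, by omega⟩ with hj0
    set j1 : Fin m := ⟨1, by omega⟩ with hj1
    have hne : j0 ≠ j1 := by simp [hj0, hj1, Fin.ext_iff]
    set c : Fin m → Kˣ := fun j => if j = j0 then ζ else 1 with hc
    have h0 : orderOf (c j0) = 4 := by simp [hc, hζ]
    have h1 : c j1 = 1 := by simp [hc, hne.symm]
    have h4 : ∀ j, (c j) ^ 4 = 1 := by
      intro j
      by_cases hj : j = j0 <;> simp [hc, hj, hζ4]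
    obtain ⟨ho1, ho2⟩ := key_orders (F := F) b c j0 j1 hne h0 h1 h4
    exact ⟨diagAut b c, ho1, ho2⟩
  · -- Part 2 : m ≥ 3
    intro hm3
    set j0 : Fin m := ⟨0, by omega⟩ with hj0
    set j2 : Fin m := ⟨1, by omega⟩ with hj2
    set j1 : Fin m := ⟨2, by omega⟩ with hj1
    have hne01 : j0 ≠ j1 := by simp [hj0, hj1, Fin.ext_iff]
    have hne02 : j0 ≠ j2 := by simp [hj0, hj2, Fin.ext_iff]
    have hne21 : j2 ≠ j1 := by simp [hj2, hj1, Fin.ext_iff]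
    set c : Fin m → Kˣ := fun j => if j = j0 then ζ else if j = j2 then ζ⁻¹ else 1 with hc
    have h0 : orderOf (c j0) = 4 := by simp [hc, hζ]
    have h1 : c j1 = 1 := by simp [hc, hne01.symm, hne21.symm]
    have h4 : ∀ j, (c j) ^ 4 = 1 := by
      intro j
      by_cases hj : j = j0
      · simp [hc, hj, hζ4]
      · by_cases hj' : j = j2
        · simp [hc, hj, hj', Ne.symm hne02, inv_pow, hζ4]
        · simp [hc, hj, hj']
    obtain ⟨ho1, ho2⟩ := key_orders (F := F) b c j0 j1 hne01 h0 h1 h4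
    refine ⟨diagAut b c, ho1, ho2, ?_⟩
    -- determinant computation
    set y := diagAut b c with hy_def
    set a : V ≃ₗ[K] V := diagAut b (fun j => if j = j0 then ζ else 1) with ha_def
    set a' : V ≃ₗ[K] V := diagAut b (fun j => if j = j0 then ζ⁻¹ else 1) with ha'_def
    set g : V ≃ₗ[K] V := b.equiv b (Equiv.swap j0 j2) with hg_def
    have hc0 : c j0 = ζ := by simp [hc]
    have hc2 : c j2 = ζ⁻¹ := by simp [hc, Ne.symm hne02]
    have hcelse : ∀ j, j ≠ j0 → j ≠ j2 → c j = 1 := fun j h h' => by simp [hc, h, h']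
    have hdecomp : ∀ v : V, y v = a (g (a' (g.symm v))) := by
      have : y = ((g.symm.trans a').trans g).trans a := by
        apply LinearEquiv.toLinearMap_injective
        apply b.ext; intro j
        have hgs : ∀ i : Fin m, g.symm (b i) = b (Equiv.swap j0 j2 i) := by
          intro i
          apply g.injective
          rw [LinearEquiv.apply_symm_apply, hg_def, Module.Basis.equiv_apply,
            Equiv.swap_apply_self]
        simp only [LinearEquiv.coe_coe, LinearEquiv.trans_apply, hgs]
        by_cases hj : j = j0
        · subst hj
          rw [Equiv.swap_apply_left]
          simp [ha'_def, ha_def, hy_def, hg_def, hne02.symm, Module.Basis.equiv_apply,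
            Equiv.swap_apply_right, hc0]
        · by_cases hj' : j = j2
          · subst hj'
            rw [Equiv.swap_apply_right]
            simp [ha'_def, ha_def, hy_def, hg_def, hne02, hne02.symm, Module.Basis.equiv_apply,
              Equiv.swap_apply_left, map_smul, hc2]
          · rw [Equiv.swap_apply_of_ne_of_ne hj hj']
            simp [ha'_def, ha_def, hy_def, hg_def, hj, hj', Module.Basis.equiv_apply,
              Equiv.swap_apply_of_ne_of_ne hj hj', hcelse j hj hj']
      intro v
      rw [this]
      rfl
    set aF : V →ₗ[F] V := ((a.restrictScalars F : V ≃ₗ[F] V) : V →ₗ[F] V) with haF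
    set a'F : V →ₗ[F] V := ((a'.restrictScalars F : V ≃ₗ[F] V) : V →ₗ[F] V) with ha'F
    set gF : V →ₗ[F] V := ((g.restrictScalars F : V ≃ₗ[F] V) : V →ₗ[F] V) with hgF
    set gF' : V →ₗ[F] V := (((g.restrictScalars F).symm : V ≃ₗ[F] V) : V →ₗ[F] V) with hgF'
    have e1 : ((y.restrictScalars F : V ≃ₗ[F] V) : V →ₗ[F] V) =
        aF.comp (gF.comp (a'F.comp gF')) := by
      apply LinearMap.ext
      intro v
      exact hdecomp v
    have haa' : ∀ v : V, a (a' v) = v := by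
      have : a * a' = 1 := by
        apply LinearEquiv.toLinearMap_injective
        apply b.ext; intro j
        show a (a' (b j)) = b j
        by_cases hj : j = j0
        · subst hj
          simp [ha_def, ha'_def, map_smul, smul_smul]
        · simp [ha_def, ha'_def, hj]
      intro v
      exact DFunLike.congr_fun this v
    have hgg : ∀ v : V, g (g.symm v) = v := fun v => g.apply_symm_apply v
    have d1 : LinearMap.det aF * LinearMap.det a'F = 1 := by
      rw [← LinearMap.det_comp]
      have : aF.comp a'F = LinearMap.id := by
        apply LinearMap.ext; intro v; exact haa' v
      rw [this, LinearMap.det_id]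
    have d2 : LinearMap.det gF * LinearMap.det gF' = 1 := by
      rw [← LinearMap.det_comp]
      have : gF.comp gF' = LinearMap.id := by
        apply LinearMap.ext; intro v; exact hgg v
      rw [this, LinearMap.det_id]
    rw [e1, LinearMap.det_comp, LinearMap.det_comp, LinearMap.det_comp]
    calc LinearMap.det aF * (LinearMap.det gF * (LinearMap.det a'F * LinearMap.det gF'))
        = (LinearMap.det aF * LinearMap.det a'F) *
          (LinearMap.det gF * LinearMap.det gF') := by ring
      _ = 1 := by rw [d1, d2, one_mul]
end

section
/- Let q be an odd prime power and q ≡ ±3 (mod 8). Then the Sylow 2-subgroups of PSL_2(q) are Klein four-groups (elementary abelian of order 4). -/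
open Matrix

instance : Fact (Even (Fintype.card (Fin 2))) := ⟨⟨1, rfl⟩⟩

section Stmt10Aux

variable {F : Type*} [Field F] [Fintype F]

private lemma stmt10_ch2 {F : Type*} [CommRing F] (M : Matrix (Fin 2) (Fin 2) F) :
    M ^ 2 = Matrix.trace M • M - Matrix.det M • (1 : Matrix (Fin 2) (Fin 2) F) := by
  ext i j
  fin_cases i <;> fin_cases j <;>
    simp [pow_two, Matrix.mul_apply, Fin.sum_univ_two, Matrix.trace_fin_two, Matrix.det_fin_two,
      Matrix.one_apply] <;> ring

private lemma stmt10_two_ne_zero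
    (h : Fintype.card F % 8 = 3 ∨ Fintype.card F % 8 = 5) : (2 : F) ≠ 0 := by
  intro h2
  have hd : ringChar F ∣ 2 := (CharP.cast_eq_zero_iff F (ringChar F) 2).mp (by exact_mod_cast h2)
  have hp : (ringChar F).Prime := CharP.char_is_prime F (ringChar F)
  have : ringChar F = 2 := (Nat.prime_dvd_prime_iff_eq hp Nat.prime_two).mp hd
  have := FiniteField.even_card_of_char_two this
  omega

private lemma stmt10_sq_mem
    (h : Fintype.card F % 8 = 3 ∨ Fintype.card F % 8 = 5)
    (M : Matrix (Fin 2) (Fin 2) F) (hdet : M.det = 1)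
    (h4 : M ^ 4 = 1 ∨ M ^ 4 = -1) : M ^ 2 = 1 ∨ M ^ 2 = -1 := by
  set t := Matrix.trace M with ht
  have hCH : M ^ 2 = t • M - (1 : Matrix (Fin 2) (Fin 2) F) := by
    rw [stmt10_ch2, hdet, one_smul]
  have h2 : M * M = t • M - 1 := by rw [← pow_two, hCH]
  have hM4 : M ^ 4 = (t*t*t - 2*t) • M + (1 - t*t) • (1 : Matrix (Fin 2) (Fin 2) F) := by
    have e : M ^ 4 = (M*M) * (M*M) := by
      rw [show (4:ℕ) = 2+2 from rfl, pow_add, pow_two]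
    rw [e, h2]
    simp only [mul_sub, sub_mul, one_mul, mul_one, Matrix.smul_mul, Matrix.mul_smul, smul_smul, h2]
    module
  rcases h4 with h4 | h4
  · have key : (t*t*t - 2*t) • M = (t*t) • (1 : Matrix (Fin 2) (Fin 2) F) := by
      rw [h4] at hM4
      linear_combination (norm := module) hM4.symm
    by_cases htz : t*t*t - 2*t = 0
    · have h0 : (t*t) • (1 : Matrix (Fin 2) (Fin 2) F) = 0 := by
        rw [← key, htz, zero_smul]
      have ht0 : t = 0 := by
        have := congrFun (congrFun h0 0) 0
        simp [Matrix.one_apply] at this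
        exact mul_self_eq_zero.mp (by simpa using this)
      right
      rw [hCH, ht0, zero_smul, zero_sub]
    · left
      have hM : M = ((t*t*t - 2*t)⁻¹ * (t*t)) • (1 : Matrix (Fin 2) (Fin 2) F) := by
        have := congrArg (fun N => (t*t*t - 2*t)⁻¹ • N) key
        simpa [smul_smul, inv_mul_cancel₀ htz] using this
      set c := (t*t*t - 2*t)⁻¹ * (t*t) with hc
      have hc2 : c * c = 1 := by
        have := hdet
        rw [hM, Matrix.det_smul, Matrix.det_one, mul_one] at this
        simpa [pow_two, Fintype.card_fin] using this
      rw [hM, smul_pow, one_pow, pow_two, hc2, one_smul]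
  · exfalso
    have key : (t*t*t - 2*t) • M = (t*t - 2) • (1 : Matrix (Fin 2) (Fin 2) F) := by
      rw [h4] at hM4
      linear_combination (norm := module) hM4.symm
    by_cases htz : t*t*t - 2*t = 0
    · have h0 : (t*t - 2) • (1 : Matrix (Fin 2) (Fin 2) F) = 0 := by
        rw [← key, htz, zero_smul]
      have ht2 : t*t = 2 := by
        have := congrFun (congrFun h0 0) 0
        simp [Matrix.one_apply] at this
        have h' : t*t - 2 = 0 := by simpa using this
        exact eq_of_sub_eq_zero h'
      have hsq : IsSquare (2 : F) := ⟨t, ht2.symm⟩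
      rcases FiniteField.isSquare_two_iff.mp hsq with ⟨h3, h5⟩
      tauto
    · have hM : M = ((t*t*t - 2*t)⁻¹ * (t*t - 2)) • (1 : Matrix (Fin 2) (Fin 2) F) := by
        have := congrArg (fun N => (t*t*t - 2*t)⁻¹ • N) key
        simpa [smul_smul, inv_mul_cancel₀ htz] using this
      set c := (t*t*t - 2*t)⁻¹ * (t*t - 2) with hc
      have hc2 : c * c = 1 := by
        have := hdet
        rw [hM, Matrix.det_smul, Matrix.det_one, mul_one] at this
        simpa [pow_two, Fintype.card_fin] using this
      have hM4' : M ^ 4 = 1 := by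
        rw [hM, smul_pow, one_pow]
        have hc4 : c ^ 4 = 1 := by
          calc c ^ 4 = (c*c)*(c*c) := by ring
          _ = 1 := by rw [hc2, one_mul]
        rw [hc4, one_smul]
      rw [hM4'] at h4
      have := congrFun (congrFun h4 0) 0
      simp [Matrix.one_apply] at this
      exact stmt10_two_ne_zero h (by linear_combination this)

private lemma stmt10_center_char {A : Matrix.SpecialLinearGroup (Fin 2) F} :
    A ∈ Subgroup.center (Matrix.SpecialLinearGroup (Fin 2) F) ↔ A = 1 ∨ A = -1 := by
  rw [Matrix.SpecialLinearGroup.mem_center_iff]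
  constructor
  · rintro ⟨r, hr, hrA⟩
    rw [Fintype.card_fin, pow_two] at hr
    rcases mul_self_eq_one_iff.mp hr with rfl | rfl
    · left
      ext i j
      rw [← hrA]
      simp [Matrix.scalar_apply, Matrix.one_apply, Matrix.diagonal_apply]
    · right
      ext i j
      rw [← hrA]
      simp [Matrix.scalar_apply, Matrix.one_apply, Matrix.diagonal_apply,
        Matrix.SpecialLinearGroup.coe_neg]
      split <;> simp
  · rintro (rfl | rfl)
    · exact ⟨1, by simp⟩
    · refine ⟨-1, by simp, ?_⟩
      ext i j
      simp [Matrix.scalar_apply, Matrix.diagonal_apply, Matrix.SpecialLinearGroup.coe_neg,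
        Matrix.one_apply]
      split <;> simp

private lemma stmt10_neg_one_ne (h2 : (2:F) ≠ 0) :
    (-1 : Matrix.SpecialLinearGroup (Fin 2) F) ≠ 1 := by
  intro hE
  have := congrFun (congrFun (congrArg Subtype.val hE) 0) 0
  simp [Matrix.SpecialLinearGroup.coe_neg, Matrix.one_apply] at this
  exact h2 (by linear_combination -this)

private lemma stmt10_card_center (h2 : (2:F) ≠ 0) :
    Nat.card (Subgroup.center (Matrix.SpecialLinearGroup (Fin 2) F)) = 2 := by
  have hc : Subgroup.center (Matrix.SpecialLinearGroup (Fin 2) F)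
      = Subgroup.zpowers (-1 : Matrix.SpecialLinearGroup (Fin 2) F) := by
    ext A
    rw [stmt10_center_char]
    constructor
    · rintro (rfl | rfl)
      · exact Subgroup.one_mem _
      · exact Subgroup.mem_zpowers _
    · rintro ⟨k, hk⟩
      have hsq : (-1 : Matrix.SpecialLinearGroup (Fin 2) F) ^ (2:ℤ) = 1 := by
        rw [zpow_two]; simp
      rcases Int.even_or_odd k with ⟨m, hm⟩ | ⟨m, hm⟩
      · left
        rw [← hk]
        show (-1 : Matrix.SpecialLinearGroup (Fin 2) F) ^ k = 1
        rw [hm, show m + m = 2 * m by ring, _root_.zpow_mul, hsq, _root_.one_zpow]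
      · right
        rw [← hk]
        show (-1 : Matrix.SpecialLinearGroup (Fin 2) F) ^ k = -1
        rw [hm, _root_.zpow_add, _root_.zpow_mul, hsq, _root_.one_zpow, zpow_one, one_mul]
  rw [hc, Nat.card_zpowers]
  exact orderOf_eq_prime (by simp) (stmt10_neg_one_ne h2)

private lemma stmt10_card_SL :
    Nat.card (Matrix.SpecialLinearGroup (Fin 2) F) * (Fintype.card F - 1)
      = (Fintype.card F ^ 2 - 1) * (Fintype.card F ^ 2 - Fintype.card F) := by
  classical
  set D := (Matrix.GeneralLinearGroup.det : GL (Fin 2) F →* Fˣ) with hD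
  have hsurj : Function.Surjective D := by
    intro u
    refine ⟨Matrix.GeneralLinearGroup.mkOfDetNeZero (Matrix.diagonal ![u.val, 1]) ?_, ?_⟩
    · simp [Matrix.det_diagonal, Fin.prod_univ_two, u.ne_zero]
    · ext
      show ((Matrix.diagonal ![u.val, 1]).det) = u.val
      simp [Matrix.det_diagonal, Fin.prod_univ_two]
  have eSL : Matrix.SpecialLinearGroup (Fin 2) F ≃ D.ker := by
    refine ⟨fun g => ⟨Matrix.SpecialLinearGroup.toGL g, ?_⟩,
      fun N => ⟨(N.1 : Matrix (Fin 2) (Fin 2) F), ?_⟩, fun g => rfl, fun N => ?_⟩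
    · rw [MonoidHom.mem_ker]
      exact Matrix.SpecialLinearGroup.coeToGL_det g
    · have := N.2
      rw [MonoidHom.mem_ker] at this
      exact congrArg Units.val this
    · exact Subtype.ext (Units.ext rfl)
  have h1 : Nat.card (GL (Fin 2) F) = Nat.card (GL (Fin 2) F ⧸ D.ker) * Nat.card D.ker :=
    Subgroup.card_eq_card_quotient_mul_card_subgroup D.ker
  have h2 : Nat.card (GL (Fin 2) F ⧸ D.ker) = Nat.card Fˣ :=
    Nat.card_congr (QuotientGroup.quotientKerEquivOfSurjective D hsurj).toEquiv
  have h3 : Nat.card D.ker = Nat.card (Matrix.SpecialLinearGroup (Fin 2) F) :=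
    (Nat.card_congr eSL).symm
  have h4 : Nat.card (GL (Fin 2) F)
      = (Fintype.card F ^ 2 - 1) * (Fintype.card F ^ 2 - Fintype.card F) := by
    rw [Matrix.card_GL_field]
    simp [Fin.prod_univ_two]
  have h5 : Nat.card Fˣ = Fintype.card F - 1 := by
    rw [Nat.card_eq_fintype_card, Fintype.card_units]
  rw [h1, h2, h3, h5] at h4
  rw [← h4]
  ring

private lemma stmt10_factorization {P q : ℕ} (h : q % 8 = 3 ∨ q % 8 = 5)
    (hP : P * 2 * (q - 1) = (q ^ 2 - 1) * (q ^ 2 - q)) :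
    (Nat.factorization P) 2 = 2 := by
  have hm : ∃ m, Odd m ∧ P = 4 * m := by
    set k := q / 8 with hk
    rcases h with h | h
    · have hq : q = 8 * k + 3 := by omega
      have e1 : q ^ 2 - 1 = 64*k^2 + 48*k + 8 := Nat.sub_eq_of_eq_add (by rw [hq]; ring)
      have e2 : q ^ 2 - q = 64*k^2 + 40*k + 6 := Nat.sub_eq_of_eq_add (by rw [hq]; ring)
      have e3 : q - 1 = 8*k + 2 := by omega
      refine ⟨(8*k+3) * ((4*k+1) * (2*k+1)), ⟨32*k^3 + 36*k^2 + 13*k + 1, by ring⟩, ?_⟩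
      rw [e1, e2, e3] at hP
      have h2 : (4 * ((8*k+3) * ((4*k+1) * (2*k+1)))) * (2 * (8*k+2))
          = (64*k^2 + 48*k + 8) * (64*k^2 + 40*k + 6) := by ring
      have := hP.trans h2.symm
      rw [mul_assoc] at this
      exact Nat.eq_of_mul_eq_mul_right (by positivity) this
    · have hq : q = 8 * k + 5 := by omega
      have e1 : q ^ 2 - 1 = 64*k^2 + 80*k + 24 := Nat.sub_eq_of_eq_add (by rw [hq]; ring)
      have e2 : q ^ 2 - q = 64*k^2 + 72*k + 20 := Nat.sub_eq_of_eq_add (by rw [hq]; ring)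
      have e3 : q - 1 = 8*k + 4 := by omega
      refine ⟨(8*k+5) * ((2*k+1) * (4*k+3)), ⟨32*k^3 + 60*k^2 + 37*k + 7, by ring⟩, ?_⟩
      rw [e1, e2, e3] at hP
      have h2 : (4 * ((8*k+5) * ((2*k+1) * (4*k+3)))) * (2 * (8*k+4))
          = (64*k^2 + 80*k + 24) * (64*k^2 + 72*k + 20) := by ring
      have := hP.trans h2.symm
      rw [mul_assoc] at this
      exact Nat.eq_of_mul_eq_mul_right (by positivity) this
  obtain ⟨m, hodd, rfl⟩ := hm
  have hm0 : m ≠ 0 := by rintro rfl; simp at hodd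
  rw [Nat.factorization_mul (by norm_num) hm0, Finsupp.add_apply]
  have h4 : (Nat.factorization 4) 2 = 2 := by
    rw [show (4:ℕ) = 2 ^ 2 by norm_num, Nat.Prime.factorization_pow Nat.prime_two,
      Finsupp.single_eq_same]
  have hmf : (Nat.factorization m) 2 = 0 :=
    Nat.factorization_eq_zero_of_not_dvd (by
      rw [Nat.two_dvd_ne_zero]
      exact Nat.odd_iff.mp hodd)
  omega

private lemma stmt10_psl_pow_four
    (h : Fintype.card F % 8 = 3 ∨ Fintype.card F % 8 = 5)
    (x : Matrix.SpecialLinearGroup (Fin 2) F ⧸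
      Subgroup.center (Matrix.SpecialLinearGroup (Fin 2) F))
    (hx : x ^ 4 = 1) : x ^ 2 = 1 := by
  obtain ⟨g, rfl⟩ := QuotientGroup.mk_surjective x
  have h4 : g ^ 4 ∈ Subgroup.center (Matrix.SpecialLinearGroup (Fin 2) F) := by
    rw [← QuotientGroup.eq_one_iff]
    exact hx
  have h4' : (g : Matrix (Fin 2) (Fin 2) F) ^ 4 = 1
      ∨ (g : Matrix (Fin 2) (Fin 2) F) ^ 4 = -1 := by
    rcases stmt10_center_char.mp h4 with hE | hE
    · left
      have := congrArg Subtype.val hE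
      simpa using this
    · right
      have := congrArg Subtype.val hE
      simpa using this
  have h2' := stmt10_sq_mem h (g : Matrix (Fin 2) (Fin 2) F) g.prop h4'
  have h2c : g ^ 2 ∈ Subgroup.center (Matrix.SpecialLinearGroup (Fin 2) F) := by
    rw [stmt10_center_char]
    rcases h2' with hE | hE
    · left; exact Subtype.ext (by simpa using hE)
    · right; exact Subtype.ext (by simpa using hE)
  rw [show ((g : Matrix.SpecialLinearGroup (Fin 2) F ⧸
      Subgroup.center (Matrix.SpecialLinearGroup (Fin 2) F)) ^ 2)
      = ((g ^ 2 : Matrix.SpecialLinearGroup (Fin 2) F) : Matrix.SpecialLinearGroup (Fin 2) F ⧸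
      Subgroup.center (Matrix.SpecialLinearGroup (Fin 2) F)) from rfl,
    QuotientGroup.eq_one_iff]
  exact h2c

end Stmt10Aux

/-- Let `q` be an odd prime power with `q ≡ ±3 (mod 8)`. Then the Sylow 2-subgroups of
`PSL_2(q) = SL_2(q)/{±1}` are Klein four-groups (elementary abelian of order 4). -/
theorem stmt10 (F : Type*) [Field F] [Fintype F]
    (h : Fintype.card F % 8 = 3 ∨ Fintype.card F % 8 = 5)
    (S : Sylow 2 (Matrix.SpecialLinearGroup (Fin 2) F ⧸
      Subgroup.center (Matrix.SpecialLinearGroup (Fin 2) F))) :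
    Nat.card (S : Subgroup (Matrix.SpecialLinearGroup (Fin 2) F ⧸
      Subgroup.center (Matrix.SpecialLinearGroup (Fin 2) F))) = 4 ∧
    ∀ x : (S : Subgroup (Matrix.SpecialLinearGroup (Fin 2) F ⧸
      Subgroup.center (Matrix.SpecialLinearGroup (Fin 2) F))), x ^ 2 = 1 := by
  classical
  have h2F : (2 : F) ≠ 0 := stmt10_two_ne_zero h
  have hSL := stmt10_card_SL (F := F)
  have hq : Nat.card (Matrix.SpecialLinearGroup (Fin 2) F)
      = Nat.card (Matrix.SpecialLinearGroup (Fin 2) F ⧸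
          Subgroup.center (Matrix.SpecialLinearGroup (Fin 2) F))
        * Nat.card (Subgroup.center (Matrix.SpecialLinearGroup (Fin 2) F)) :=
    Subgroup.card_eq_card_quotient_mul_card_subgroup _
  rw [stmt10_card_center h2F] at hq
  rw [hq] at hSL
  have hfac := stmt10_factorization h hSL
  have hcard : Nat.card (S : Subgroup (Matrix.SpecialLinearGroup (Fin 2) F ⧸
      Subgroup.center (Matrix.SpecialLinearGroup (Fin 2) F))) = 4 := by
    have := Sylow.card_eq_multiplicity S
    rw [hfac] at this
    simpa using this
  refine ⟨hcard, fun x => ?_⟩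
  have hx4 : x ^ 4 = 1 := by
    rw [← hcard]
    exact pow_card_eq_one'
  have hxv : (x : Matrix.SpecialLinearGroup (Fin 2) F ⧸
      Subgroup.center (Matrix.SpecialLinearGroup (Fin 2) F)) ^ 4 = 1 := by
    exact_mod_cast congrArg Subtype.val hx4
  have := stmt10_psl_pow_four h _ hxv
  ext
  push_cast
  exact this
end

section
/- Let α be a partition of l+1 and for a prime power q let χ^α denote the unipotent character of GL_{l+1}(q) (type A_l(q)) labelled by α, whose degree satisfies the hook-length formula: the q'-part of χ^α(1) equals (q−1)|A_l(q)|_{r'} / ∏_h (q^h − 1), where h runs over the hook lengths of α. If l+1 is not a triangular number, then α has at least one hook of even length. -/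
/-- The hook length of the cell `(i, j)` of a Young diagram `μ`:
arm length plus leg length plus one. -/
def YoungDiagram.hookLength (μ : YoungDiagram) (i j : ℕ) : ℕ :=
  μ.rowLen i + μ.colLen j - i - j - 1

/-- If `n` is not a triangular number, then every partition of `n` (equivalently, every
Young diagram with `n` cells) has at least one hook of even length. -/
theorem stmt12 (n : ℕ) (hn : ¬ ∃ k : ℕ, n = k * (k + 1) / 2)
    (μ : YoungDiagram) (hμ : μ.cells.card = n) :
    ∃ c ∈ μ.cells, Even (μ.hookLength c.1 c.2) := by
  by_contra hcon
  push_neg at hcon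
  apply hn
  set m := μ.colLen 0 with hm
  have hrm : μ.rowLen m = 0 := by
    by_contra h
    have h2 : (m, 0) ∈ μ := YoungDiagram.mem_iff_lt_rowLen.2 (Nat.pos_of_ne_zero h)
    rw [YoungDiagram.mem_iff_lt_colLen] at h2
    omega
  have key : ∀ i, μ.rowLen i ≠ 0 → μ.rowLen i = μ.rowLen (i + 1) + 1 := by
    intro i hi
    have hle := μ.rowLen_anti i (i + 1) (Nat.le_succ i)
    set r := μ.rowLen i with hr
    set c := μ.rowLen (i + 1) with hc
    rcases Nat.lt_or_ge r (c + 2) with h2 | h2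
    · rcases eq_or_lt_of_le hle with heq | hlt
      · exfalso
        have hc1 : (i + 1, c - 1) ∈ μ := YoungDiagram.mem_iff_lt_rowLen.2 (by omega)
        have hc0 : (i, c - 1) ∈ μ := YoungDiagram.mem_iff_lt_rowLen.2 (by omega)
        have hL : i + 1 < μ.colLen (c - 1) := YoungDiagram.mem_iff_lt_colLen.1 hc1
        have h1 := hcon (i, c - 1) hc0
        have h2' := hcon (i + 1, c - 1) hc1
        simp only [YoungDiagram.hookLength] at h1 h2'
        rw [Nat.not_even_iff] at h1 h2'
        omega
      · omega
    · exfalso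
      have hc0 : (i, r - 2) ∈ μ := YoungDiagram.mem_iff_lt_rowLen.2 (by omega)
      have hL1 : i < μ.colLen (r - 2) := YoungDiagram.mem_iff_lt_colLen.1 hc0
      have hnc : (i + 1, r - 2) ∉ μ := by
        rw [YoungDiagram.mem_iff_lt_rowLen]
        omega
      rw [YoungDiagram.mem_iff_lt_colLen] at hnc
      have h1 := hcon (i, r - 2) hc0
      simp only [YoungDiagram.hookLength] at h1
      rw [Nat.not_even_iff] at h1
      omega
  have hrow : ∀ k, k ≤ m → μ.rowLen (m - k) = k := by
    intro k
    induction k with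
    | zero => intro _; simpa using hrm
    | succ k ih =>
      intro hk
      have h1 : μ.rowLen (m - (k + 1)) ≠ 0 := by
        have h3 : (m - (k + 1), 0) ∈ μ := YoungDiagram.mem_iff_lt_colLen.2 (by omega)
        rw [YoungDiagram.mem_iff_lt_rowLen] at h3
        omega
      have h4 := key _ h1
      have he : m - (k + 1) + 1 = m - k := by omega
      rw [he] at h4
      rw [h4, ih (by omega)]
  have hrowi : ∀ i, i < m → μ.rowLen i = m - i := by
    intro i hi
    have := hrow (m - i) (by omega)
    rwa [Nat.sub_sub_self (le_of_lt hi)] at this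
  have hcard : μ.cells.card = ∑ i ∈ Finset.range m, μ.rowLen i := by
    rw [Finset.card_eq_sum_card_fiberwise (f := Prod.fst) (t := Finset.range m)
      (fun x hx => by
        rw [Finset.mem_coe, Finset.mem_range, hm, ← YoungDiagram.mem_iff_lt_colLen]
        exact μ.up_left_mem (le_refl _) (Nat.zero_le _) hx)]
    exact Finset.sum_congr rfl fun i _ => by
      rw [YoungDiagram.rowLen_eq_card, YoungDiagram.row]
  have hsum : ∑ i ∈ Finset.range m, μ.rowLen i = ∑ i ∈ Finset.range m, (m - i) :=
    Finset.sum_congr rfl fun i hi => hrowi i (Finset.mem_range.1 hi)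
  have hS2 : (∑ i ∈ Finset.range m, (m - i)) + (∑ i ∈ Finset.range m, i) = m * m := by
    rw [← Finset.sum_add_distrib]
    rw [Finset.sum_congr rfl (fun i hi => show m - i + i = m by
      have := Finset.mem_range.1 hi; omega)]
    simp [Finset.sum_const, mul_comm]
  have hS3 := Finset.sum_range_id_mul_two m
  refine ⟨m, ?_⟩
  have hc1 : m * (m + 1) = m * (m - 1) + 2 * m := by
    cases m with
    | zero => rfl
    | succ k => simp [Nat.succ_sub_one]; ring
  have hc2 : m * m = m * (m - 1) + m := by
    cases m with
    | zero => rfl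
    | succ k => simp [Nat.succ_sub_one]; ring
  omega
end

section
/- Let q be an odd prime power, n = md, and view GL_1(q^n) ≤ GL_n(q) by restriction of scalars (m = 1 case). Then the intersection of a Sylow 2-subgroup T of GL_1(q^n) with SL_n(q) is cyclic of order (q^n − 1)_+ / (q − 1)_+, where n_+ denotes the 2-part. -/
open Finset

private lemma norm_eq_pow_aux (F K : Type*) [Field F] [Fintype F] [Field K] [Fintype K]
    [Algebra F K] (x : K) :
    algebraMap F K (Algebra.norm F x) =
      x ^ (∑ i ∈ Finset.range (Module.finrank F K), Fintype.card F ^ i) := by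
  classical
  haveI : Module.Finite F K := Module.Finite.of_finite
  set q := Fintype.card F with hq
  set n := Module.finrank F K with hn
  obtain ⟨p, hp⟩ := CharP.exists F
  haveI : CharP F p := hp
  have hpp : p.Prime := CharP.char_is_prime F p
  haveI : Fact p.Prime := ⟨hpp⟩
  haveI : CharP K p := charP_of_injective_algebraMap (algebraMap F K).injective p
  haveI : ExpChar K p := ExpChar.prime hpp
  obtain ⟨k, -, hqk⟩ := FiniteField.card F p
  -- the Frobenius x ↦ x ^ q as an F-algebra equivalence
  let f : K →ₐ[F] K :=
    { toRingHom := iterateFrobenius K p k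
      commutes' := fun a => by
        show iterateFrobenius K p k (algebraMap F K a) = algebraMap F K a
        rw [iterateFrobenius_def, ← map_pow, ← hqk, FiniteField.pow_card] }
  have hfbij : Function.Bijective f :=
    Finite.injective_iff_bijective.mp f.toRingHom.injective
  let φ : K ≃ₐ[F] K := AlgEquiv.ofBijective f hfbij
  have hφ : ∀ y : K, φ y = y ^ q := fun y => by
    show f y = y ^ q
    simp only [f, AlgHom.coe_mk, iterateFrobenius_def]
    rw [hq, hqk]
  have hφpow : ∀ (i : ℕ) (y : K), (φ ^ i) y = y ^ q ^ i := by
    intro i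
    induction i with
    | zero => intro y; simp
    | succ i ih =>
      intro y
      rw [pow_succ, AlgEquiv.mul_apply, hφ, ih, ← pow_mul, pow_succ, mul_comm (q ^ i) q,
        pow_mul]
  have hq2 : 1 < q := Fintype.one_lt_card
  have hn1 : 0 < n := Module.finrank_pos
  have hcardG : Fintype.card (K ≃ₐ[F] K) = n := by
    rw [← Nat.card_eq_fintype_card]; exact IsGalois.card_aut_eq_finrank F K
  obtain ⟨g, hg⟩ := IsCyclic.exists_generator (α := Kˣ)
  have hcardK : Fintype.card K = q ^ n := Module.card_eq_pow_finrank
  have hcardKx : Fintype.card Kˣ = q ^ n - 1 := by rw [Fintype.card_units, hcardK]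
  have hog : orderOf g = q ^ n - 1 := by
    rw [orderOf_eq_card_of_forall_mem_zpowers hg, Nat.card_eq_fintype_card, hcardKx]
  have hord : orderOf φ = n := by
    have hdvd : orderOf φ ∣ n := hcardG ▸ orderOf_dvd_card
    have hdpos : 0 < orderOf φ := orderOf_pos φ
    refine Nat.le_antisymm (Nat.le_of_dvd hn1 hdvd) ?_
    have h1 : (g : K) ^ q ^ orderOf φ = g := by
      have := congrArg (fun σ : K ≃ₐ[F] K => σ (g : K)) (pow_orderOf_eq_one φ)
      simp only [hφpow, AlgEquiv.one_apply] at this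
      exact this
    have h2 : g ^ q ^ orderOf φ = g ^ 1 := by
      ext
      simpa [Units.val_pow_eq_pow_val] using h1
    have h3 := pow_eq_pow_iff_modEq.mp h2
    rw [hog] at h3
    have h4 : q ^ n - 1 ∣ q ^ orderOf φ - 1 :=
      (Nat.modEq_iff_dvd' (Nat.one_le_pow _ _ (by omega))).mp h3.symm
    have h5 : 0 < q ^ orderOf φ - 1 := by
      have := Nat.one_lt_pow hdpos.ne' hq2
      omega
    have h6 := Nat.le_of_dvd h5 h4
    have h7 : q ^ n ≤ q ^ orderOf φ := by
      have := Nat.one_le_pow n q (by omega)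
      omega
    exact (Nat.pow_le_pow_iff_right hq2).mp h7
  have hbij : Function.Bijective (fun i : Fin n => φ ^ (i : ℕ)) := by
    rw [Fintype.bijective_iff_injective_and_card]
    refine ⟨fun i j hij => ?_, by simp [hcardG]⟩
    have h := pow_eq_pow_iff_modEq.mp hij
    rw [hord] at h
    exact Fin.ext (by rwa [Nat.ModEq, Nat.mod_eq_of_lt i.2, Nat.mod_eq_of_lt j.2] at h)
  calc algebraMap F K (Algebra.norm F x) = ∏ σ : K ≃ₐ[F] K, σ x :=
        Algebra.norm_eq_prod_automorphisms F x
    _ = ∏ i : Fin n, (φ ^ (i : ℕ)) x := (Fintype.prod_bijective _ hbij _ _ fun i => rfl).symm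
    _ = ∏ i : Fin n, x ^ q ^ (i : ℕ) := by simp only [hφpow]
    _ = ∏ i ∈ range n, x ^ q ^ i := Fin.prod_univ_eq_prod_range (fun i => x ^ q ^ i) n
    _ = x ^ ∑ i ∈ range n, q ^ i := Finset.prod_pow_eq_pow_sum _ _ _

/-- View `GL_1(q^n)` inside `GL_n(q)` by restriction of scalars: `K/F` is an extension of
finite fields with `|F| = q` and `[K : F] = n`, so `Kˣ = GL_1(q^n)` and the determinant on
`GL_n(q)` restricts to the norm `Algebra.norm F : Kˣ → Fˣ`. The intersection of a Sylow
2-subgroup `S` of `Kˣ` with `SL_n(q)` (the kernel of the norm on units) is cyclic of order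
`(q^n - 1)₊ / (q - 1)₊`, where `m₊` denotes the 2-part of `m`. -/
theorem stmt16 (F K : Type*) [Field F] [Fintype F] [Field K] [Fintype K] [Algebra F K]
    (q n : ℕ) (hq : Fintype.card F = q) (hn : Module.finrank F K = n)
    (S : Sylow 2 Kˣ) :
    IsCyclic ((S : Subgroup Kˣ) ⊓ (Units.map (Algebra.norm F : K →* F)).ker : Subgroup Kˣ) ∧
    Nat.card ((S : Subgroup Kˣ) ⊓ (Units.map (Algebra.norm F : K →* F)).ker : Subgroup Kˣ) =
      2 ^ padicValNat 2 (q ^ n - 1) / 2 ^ padicValNat 2 (q - 1) := by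
  classical
  subst hq hn
  haveI : Module.Finite F K := Module.Finite.of_finite
  set q := Fintype.card F with hq
  set n := Module.finrank F K with hn
  set e := ∑ i ∈ range n, q ^ i with he_def
  set H := (Units.map (Algebra.norm F : K →* F)).ker with hH
  have hq2 : 1 < q := Fintype.one_lt_card
  have hn1 : 0 < n := Module.finrank_pos
  have hN1 : 1 < q ^ n := Nat.one_lt_pow hn1.ne' hq2
  have he : 0 < e := by
    refine Finset.sum_pos (fun i _ => pow_pos (by omega) i) ⟨0, Finset.mem_range.mpr hn1⟩
  have hNe : q ^ n - 1 = (q - 1) * e := by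
    have h1 : (1 : ℕ) ≤ q := hq2.le
    have h2 : (1 : ℕ) ≤ q ^ n := hN1.le
    zify [h1, h2, he_def]
    rw [mul_comm]
    exact (geom_sum_mul (q : ℤ) n).symm
  haveI : NeZero e := ⟨he.ne'⟩
  -- the kernel of the norm is the group of e-th roots of unity
  have hker : H = rootsOfUnity e K := by
    ext x
    rw [hH, MonoidHom.mem_ker, mem_rootsOfUnity]
    have h1 : (Algebra.norm F (x : K) = 1) ↔ (x : K) ^ e = 1 := by
      rw [← (algebraMap F K).injective.eq_iff, map_one, norm_eq_pow_aux]
    rw [Units.ext_iff, Units.ext_iff]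
    simpa [Units.val_pow_eq_pow_val] using h1
  -- a primitive e-th root of unity exists, so |H| = e
  obtain ⟨g, hg⟩ := IsCyclic.exists_generator (α := Kˣ)
  have hcardK : Fintype.card K = q ^ n := Module.card_eq_pow_finrank
  have hcardKx : Fintype.card Kˣ = q ^ n - 1 := by rw [Fintype.card_units, hcardK]
  have hog : orderOf g = q ^ n - 1 := by
    rw [orderOf_eq_card_of_forall_mem_zpowers hg, Nat.card_eq_fintype_card, hcardKx]
  have hedvd : e ∣ q ^ n - 1 := ⟨q - 1, by rw [hNe, mul_comm]⟩
  have hN0 : q ^ n - 1 ≠ 0 := by omega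
  have hoζ : orderOf (g ^ ((q ^ n - 1) / e)) = e := by
    rw [orderOf_pow, hog, Nat.gcd_eq_right (Nat.div_dvd_of_dvd hedvd),
      Nat.div_div_self hedvd hN0]
  have hprim : IsPrimitiveRoot (g ^ ((q ^ n - 1) / e)) e := by
    have h := IsPrimitiveRoot.orderOf (g ^ ((q ^ n - 1) / e))
    rwa [hoζ] at h
  have hcardH : Nat.card H = e := by
    rw [hker, Nat.card_eq_fintype_card]
    simpa [Nat.card_eq_fintype_card] using hprim.card_rootsOfUnity'
  -- Sylow theory: S ⊓ H is a Sylow 2-subgroup of H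
  haveI : Fact (Nat.Prime 2) := ⟨Nat.prime_two⟩
  obtain ⟨P⟩ : Nonempty (Sylow 2 H) := inferInstance
  haveI : Finite (Sylow 2 Kˣ) := inferInstance
  haveI : Finite (Sylow 2 ↥H) := inferInstance
  haveI hK1 := Sylow.unique_of_normal S (Subgroup.normal_of_comm _)
  haveI hH1 := Sylow.unique_of_normal P (Subgroup.normal_of_comm _)
  have huniqK : ∀ Q : Sylow 2 Kˣ, Q = S := fun Q => Subsingleton.elim Q S
  have huniqH : ∀ Q : Sylow 2 ↥H, Q = P := fun Q => Subsingleton.elim Q P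
  have hSH : (S : Subgroup Kˣ) ⊓ H = Subgroup.map H.subtype (P : Subgroup H) := by
    refine le_antisymm ?_ ?_
    · have hA : IsPGroup 2 ((S : Subgroup Kˣ).subgroupOf H) := S.isPGroup'.comap_subtype
      obtain ⟨Q, hQ⟩ := hA.exists_le_sylow
      rw [huniqH Q] at hQ
      rw [← Subgroup.subgroupOf_map_subtype]
      exact Subgroup.map_mono hQ
    · refine le_inf ?_ (Subgroup.map_subtype_le _)
      have h2 : IsPGroup 2 (Subgroup.map H.subtype (P : Subgroup H)) :=
        P.isPGroup'.map _
      obtain ⟨R, hR⟩ := h2.exists_le_sylow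
      rw [huniqK R] at hR
      exact hR
  have hmapcard : Nat.card (Subgroup.map H.subtype (P : Subgroup H)) =
      Nat.card (P : Subgroup H) :=
    (Nat.card_congr (Subgroup.equivMapOfInjective _ _ H.subtype_injective).toEquiv).symm
  have hcardP : Nat.card (P : Subgroup H) = 2 ^ (Nat.card ↥H).factorization 2 :=
    P.card_eq_multiplicity
  constructor
  · rw [hSH]
    infer_instance
  · rw [hSH, hmapcard, hcardP, hcardH]
    have hq1 : q - 1 ≠ 0 := by omega
    have hval : padicValNat 2 (q ^ n - 1) = padicValNat 2 (q - 1) + padicValNat 2 e := by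
      rw [hNe, padicValNat.mul hq1 he.ne']
    rw [Nat.factorization_def _ Nat.prime_two, hval, pow_add,
      Nat.mul_div_cancel_left _ (Nat.pow_pos (by norm_num))]
end

section
/- Let A be the alternating group A_n for some n ≥ 1. Then the Sylow 2-subgroups of A_n are never elementary abelian of order 2^r with r ≥ 3. -/
open Equiv Equiv.Perm Pointwise

/-- an even permutation of order 4 on `Fin 6` -/
private def sigma6 : Equiv.Perm (Fin 6) :=
  Equiv.swap 0 1 * Equiv.swap 1 2 * Equiv.swap 2 3 * Equiv.swap 4 5

private lemma sigma6_pow_four : sigma6 ^ 4 = 1 := by decide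
private lemma sigma6_sq_ne_one : sigma6 ^ 2 ≠ 1 := by decide
private lemma sigma6_sign : Equiv.Perm.sign sigma6 = 1 := by decide

/-- No alternating group `A_n` has an elementary abelian Sylow 2-subgroup of order `2^r`
with `r ≥ 3`. -/
theorem stmt19 (n : ℕ) (S : Sylow 2 (alternatingGroup (Fin n))) (r : ℕ) (hr : 3 ≤ r) :
    ¬ (Nat.card (S : Subgroup (alternatingGroup (Fin n))) = 2 ^ r ∧
       ∀ x : (S : Subgroup (alternatingGroup (Fin n))), x ^ 2 = 1) := by
  rintro ⟨hcard, hexp⟩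
  have hdvd : 2 ^ 3 ∣ Nat.card (alternatingGroup (Fin n)) :=
    dvd_trans (pow_dvd_pow 2 hr) (hcard ▸ Subgroup.card_subgroup_dvd_card _)
  -- first: n ≥ 6
  have h6 : 6 ≤ n := by
    by_contra h
    push_neg at h
    have hc : Nat.card (alternatingGroup (Fin n)) ∣ 60 := by
      interval_cases n <;>
        simp only [Nat.card_eq_fintype_card] <;> decide
    have := hdvd.trans hc
    norm_num at this
  -- the element of order 4 in A_n
  let f : Fin 6 ↪ Fin n := Fin.castLEEmb h6
  let g0 : Equiv.Perm (Fin n) := sigma6.viaEmbedding f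
  have hg0mem : g0 ∈ alternatingGroup (Fin n) := by
    have : Equiv.Perm.sign g0 = 1 := by
      unfold g0
      rw [Perm.viaEmbedding, Perm.sign_extendDomain, sigma6_sign]
    exact this
  let g : alternatingGroup (Fin n) := ⟨g0, hg0mem⟩
  have hg4 : g ^ 4 = 1 := by
    have : g0 ^ 4 = 1 := by
      unfold g0
      rw [← Perm.viaEmbeddingHom_apply, ← map_pow, sigma6_pow_four, map_one]
    exact Subtype.ext this
  have hg2 : g ^ 2 ≠ 1 := by
    intro hcon
    have h2 : g0 ^ 2 = 1 := congrArg Subtype.val hcon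
    apply sigma6_sq_ne_one
    apply Perm.viaEmbeddingHom_injective f
    rw [map_pow, map_one, Perm.viaEmbeddingHom_apply]
    exact h2
  -- zpowers g is a 2-group
  have hord : orderOf g ∣ 2 ^ 2 := orderOf_dvd_of_pow_eq_one hg4
  obtain ⟨k, -, hk⟩ := (Nat.dvd_prime_pow Nat.prime_two).mp hord
  have hP : IsPGroup 2 (Subgroup.zpowers g) :=
    IsPGroup.of_card (by rw [Nat.card_zpowers, hk])
  obtain ⟨Q, hQ⟩ := hP.exists_le_sylow
  obtain ⟨c, hc⟩ := MulAction.exists_smul_eq (alternatingGroup (Fin n)) Q S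
  have hgQ : g ∈ Q := hQ (Subgroup.mem_zpowers g)
  have hgS : c * g * c⁻¹ ∈ S := by
    rw [← hc]
    show c * g * c⁻¹ ∈ MulAut.conj c • (Q : Subgroup _)
    simpa [MulAut.smul_def] using
      Subgroup.smul_mem_pointwise_smul g (MulAut.conj c) (Q : Subgroup _) hgQ
  have := hexp ⟨c * g * c⁻¹, hgS⟩
  apply hg2
  have h2 : (c * g * c⁻¹) ^ 2 = 1 := congrArg Subtype.val this
  rw [conj_pow] at h2
  have h3 : g ^ 2 = c⁻¹ * (c * g ^ 2 * c⁻¹) * c := by group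
  rw [h3, h2]
  group
end
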